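/- Let L be a free ℤ-module of finite rank k with a negative definite symmetric bilinear form B : L × L → ℤ. Suppose α₁, …, α_k ∈ L satisfy B(α_i, α_i) = −1 for all i, and for all i ≠ j one has α_i ≠ α_j and α_i ≠ −α_j. Then B(α_i, α_j) = −δ_{ij} for all i, j, and (α₁, …, α_k) is a ℤ-basis of L; in particular B diagonalizes over the integers with all diagonal entries equal to −1. -/

import Mathlib

/-- Auxiliary: over a domain `R` with the strong rank condition, a family of
`k = finrank` vectors whose Gram matrix for a "definite" bilinear form `B` is
minus the identity is a basis. -/
theorem aux_orthonormal_is_basis {R : Type*} [CommRing R] [IsDomain R]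
    [StrongRankCondition R]
    (L : Type*) [AddCommGroup L] [Module R L] [Module.Finite R L]
    (B : L →ₗ[R] L →ₗ[R] R)
    (hsymm : ∀ u v : L, B u v = B v u)
    (hB : ∀ v : L, v ≠ 0 → B v v ≠ 0)
    (k : ℕ) (hrank : Module.finrank R L = k)
    (α : Fin k → L)
    (hgram : ∀ i j, B (α i) (α j) = if i = j then -1 else 0) :
    ∃ b : Module.Basis (Fin k) R L, ∀ i, b i = α i := by
  have hpair : ∀ (g : Fin k → R) (j : Fin k),
      B (∑ i, g i • α i) (α j) = -(g j) := by
    intro g j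
    rw [map_sum, LinearMap.sum_apply]
    simp only [map_smul, LinearMap.smul_apply, smul_eq_mul, hgram]
    rw [Finset.sum_eq_single j]
    · simp
    · intro b _ hb; simp [hb]
    · intro h; exact absurd (Finset.mem_univ j) h
  have hli : LinearIndependent R α := by
    rw [Fintype.linearIndependent_iff]
    intro g hg i
    have h := hpair g i
    rw [hg, map_zero, LinearMap.zero_apply] at h
    exact neg_eq_zero.mp h.symm
  have hspan : ∀ v : L, v ∈ Submodule.span R (Set.range α) := by
    intro v
    set w := v + ∑ i, B v (α i) • α i with hw
    have horth : ∀ j, B w (α j) = 0 := by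
      intro j
      rw [hw, map_add, LinearMap.add_apply, hpair (fun i => B v (α i)) j]
      ring
    have horth' : ∀ j, B (α j) w = 0 := fun j => (hsymm (α j) w).trans (horth j)
    by_cases hw0 : w = 0
    · have hv : v = -∑ i, B v (α i) • α i := eq_neg_of_add_eq_zero_left hw0
      rw [hv]
      exact Submodule.neg_mem _ (Submodule.sum_mem _ fun i _ =>
        Submodule.smul_mem _ _ (Submodule.subset_span (Set.mem_range_self i)))
    · exfalso
      have hli2 : LinearIndependent R (Fin.cons w α : Fin (k+1) → L) := by
        rw [Fintype.linearIndependent_iff]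
        intro g hg
        have hg0 : g 0 = 0 := by
          have h1 := congrArg (fun x => B x w) hg
          simp only [Fin.sum_univ_succ, Fin.cons_zero, Fin.cons_succ, map_add,
            map_sum, map_smul, map_zero, LinearMap.add_apply, LinearMap.sum_apply,
            LinearMap.smul_apply, LinearMap.zero_apply, smul_eq_mul, horth',
            mul_zero, Finset.sum_const_zero, add_zero] at h1
          rcases mul_eq_zero.mp h1 with h | h
          · exact h
          · exact absurd h (hB w hw0)
        have hrest : ∀ j : Fin k, g j.succ = 0 := by
          intro j
          have h1 := congrArg (fun x => B x (α j)) hg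
          rw [Fin.sum_univ_succ] at h1
          simp only [Fin.cons_zero, Fin.cons_succ, map_add, map_zero,
            LinearMap.add_apply, LinearMap.zero_apply, map_smul,
            LinearMap.smul_apply, smul_eq_mul, horth j, mul_zero, zero_add] at h1
          rw [hpair (fun i => g i.succ) j] at h1
          exact neg_eq_zero.mp h1
        intro i
        exact Fin.cases hg0 hrest i
      have hcard := hli2.fintype_card_le_finrank
      simp [hrank] at hcard
  exact ⟨Module.Basis.mk hli (by rw [← Submodule.eq_top_iff'.mpr hspan]),
    fun i => Module.Basis.mk_apply _ _ i⟩

/-- Lattice-theoretic content of Lemma 2: if `L` is a free `ℤ`-module of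
finite rank `k` with a negative definite symmetric bilinear form `B`, and
`α₁, …, α_k` have square `−1` with `αᵢ ≠ ±αⱼ` for `i ≠ j`, then the Gram
matrix is minus the identity and `(α₁, …, α_k)` is a `ℤ`-basis of `L`;
in particular `B` diagonalizes over `ℤ` with diagonal entries `−1`. -/
theorem neg_def_square_neg_one_family_is_orthonormal_basis
    (L : Type*) [AddCommGroup L] [Module ℤ L]
    [Module.Free ℤ L] [Module.Finite ℤ L]
    (B : L →ₗ[ℤ] L →ₗ[ℤ] ℤ)
    (hsymm : ∀ u v : L, B u v = B v u)
    (hneg : ∀ v : L, v ≠ 0 → B v v < 0)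
    (k : ℕ) (hrank : Module.finrank ℤ L = k)
    (α : Fin k → L)
    (hdiag : ∀ i, B (α i) (α i) = -1)
    (hne : ∀ i j, i ≠ j → α i ≠ α j ∧ α i ≠ -α j) :
    (∀ i j, B (α i) (α j) = if i = j then -1 else 0) ∧
      ∃ b : Module.Basis (Fin k) ℤ L, ∀ i, b i = α i := by
  have hgram : ∀ i j, B (α i) (α j) = if i = j then -1 else 0 := by
    intro i j
    by_cases h : i = j
    · simp [h, hdiag]
    · rw [if_neg h]
      obtain ⟨h1, h2⟩ := hne i j h
      have hsum : B (α i + α j) (α i + α j)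
          = -2 + (B (α i) (α j) + B (α i) (α j)) := by
        simp only [map_add, LinearMap.add_apply, hdiag, hsymm (α j) (α i)]
        ring
      have hdiff : B (α i - α j) (α i - α j)
          = -2 - (B (α i) (α j) + B (α i) (α j)) := by
        simp only [map_sub, LinearMap.sub_apply, hdiag, hsymm (α j) (α i)]
        ring
      have hne1 : α i + α j ≠ 0 := fun h0 => h2 (eq_neg_of_add_eq_zero_left h0)
      have hne2 : α i - α j ≠ 0 := fun h0 => h1 (sub_eq_zero.mp h0)
      have t1 := hneg _ hne1; rw [hsum] at t1
      have t2 := hneg _ hne2; rw [hdiff] at t2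
      omega
  exact ⟨hgram, aux_orthonormal_is_basis L B hsymm
    (fun v hv => (hneg v hv).ne) k hrank α hgram⟩
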